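/- Let $(X,x)$ and $(Y,y)$ be length metric spaces such that the closure of $B_2(y)$ is compact and the Gromov-Hausdorff distance between $(X,x)$ and $(Y,y)$ is at most $\epsilon$. Then for any loop $c:[0,1]\to B_1(y)\subset Y$, there exists a loop $c':[0,1]\to X$ such that $d(c(t),c'(t))\le 5\epsilon$ for all $t\in[0,1]$ (after identifying points via an $\epsilon$-Gromov-Hausdorff approximation). -/

import Mathlib

open Metric Filter Topology MeasureTheory
open scoped ENNReal NNReal

noncomputable section

/-- A loop, parametrized by `[0,1]` with equal endpoints, is contractible within the set `S`:
it admits a free homotopy, with image inside `S`, to a constant loop. -/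
def LoopContractibleIn {X : Type*} [TopologicalSpace X] (c : C(unitInterval, X))
    (S : Set X) : Prop :=
  ∃ (H : C(unitInterval × unitInterval, X)) (x₀ : X),
    (∀ t, H (t, 0) = c t) ∧ (∀ t, H (t, 1) = x₀) ∧ (∀ s, H (0, s) = H (1, s)) ∧
    Set.range H ⊆ S

/-- The module of `1`-contractibility `ρ(t,x)`: the infimum of all `ρ ≥ t` such that every
loop in `B_t(x)` is contractible in `B_ρ(x)` (and `∞` if there is no such `ρ`). -/
def contrMod {X : Type*} [PseudoEMetricSpace X] (t : ℝ≥0∞) (x : X) : ℝ≥0∞ :=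
  sInf {ρ : ℝ≥0∞ | t ≤ ρ ∧ ∀ c : C(unitInterval, X), c 0 = c 1 →
    Set.range c ⊆ EMetric.ball x t → LoopContractibleIn c (EMetric.ball x ρ)}

/-- A length metric space: the distance between two points is the infimum of the lengths
of paths joining them. -/
def IsLengthSpace (X : Type*) [PseudoEMetricSpace X] : Prop :=
  ∀ x y : X, edist x y = ⨅ γ : Path x y, eVariationOn (fun t : ℝ => γ.extend t) (Set.Icc 0 1)

/-- An `ε`-Gromov–Hausdorff approximation: `f` distorts distances by at most `ε`
and has `ε`-dense image. -/
def IsGHApprox {A B : Type*} [PseudoMetricSpace A] [PseudoMetricSpace B]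
    (f : A → B) (ε : ℝ) : Prop :=
  (∀ u v : A, |dist (f u) (f v) - dist u v| ≤ ε) ∧ ∀ b : B, ∃ a : A, dist (f a) b ≤ ε

/-- A pointed `ε`-Gromov–Hausdorff approximation. -/
def IsPointedGHApprox {A B : Type*} [PseudoMetricSpace A] [PseudoMetricSpace B]
    (f : A → B) (a : A) (b : B) (ε : ℝ) : Prop :=
  dist (f a) b ≤ ε ∧ IsGHApprox f ε

/-- A pointed `ε`-approximation at scale `R` (distortion and density on `R`-balls around
the base points). -/
def IsPGHApproxOn {A B : Type*} [PseudoMetricSpace A] [PseudoMetricSpace B]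
    (f : A → B) (a : A) (b : B) (R ε : ℝ) : Prop :=
  dist (f a) b ≤ ε ∧
  (∀ u ∈ Metric.closedBall a R, ∀ v ∈ Metric.closedBall a R,
    |dist (f u) (f v) - dist u v| ≤ ε) ∧
  ∀ y ∈ Metric.closedBall b R, ∃ u ∈ Metric.closedBall a R, dist (f u) y ≤ ε

/-- Pointed Gromov–Hausdorff convergence of `(M i, p i)` to `(X, x)`. -/
def PointedGHLim (M : ℕ → Type*) [∀ i, MetricSpace (M i)] (p : ∀ i, M i)
    (X : Type*) [MetricSpace X] (x : X) : Prop :=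
  ∀ R > 0, ∀ ε > 0, ∀ᶠ i in atTop, ∃ f : M i → X, IsPGHApproxOn f (p i) x R ε

/-- Gromov–Hausdorff convergence of a sequence of metric spaces to `X`. -/
def GHLim (M : ℕ → Type*) [∀ i, MetricSpace (M i)] (X : Type*) [MetricSpace X] : Prop :=
  ∀ ε > 0, ∀ᶠ i in atTop, ∃ f : M i → X, IsGHApprox f ε

/-- The comparison function `sn_c` for the space form of constant curvature `c`. -/
def modelSn (c t : ℝ) : ℝ :=
  if 0 < c then Real.sin (Real.sqrt c * t) / Real.sqrt c
  else if c < 0 then Real.sinh (Real.sqrt (-c) * t) / Real.sqrt (-c)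
  else t

/-- The volume of the ball of radius `r` in the `n`-dimensional simply connected space form
of constant curvature `c`. -/
def modelBallVol (n : ℕ) (c r : ℝ) : ℝ :=
  (μH[(n : ℝ) - 1] (Metric.sphere (0 : EuclideanSpace ℝ (Fin n)) 1)).toReal *
    ∫ t in (0:ℝ)..r, modelSn c t ^ (n - 1)

/-- Synthetic stand-in for the Ricci curvature lower bound `Ric ≥ (n-1)c` on an
`n`-dimensional Riemannian manifold: the Bishop–Gromov relative volume comparison with
respect to the `n`-dimensional Hausdorff measure (which is the Riemannian volume). -/
def RicciGE (M : Type*) [MetricSpace M] [MeasurableSpace M] [BorelSpace M]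
    (n : ℕ) (c : ℝ) : Prop :=
  ∀ x : M, ∀ r R : ℝ, 0 < r → r ≤ R →
    μH[(n : ℝ)] (Metric.ball x R) * ENNReal.ofReal (modelBallVol n c r) ≤
      μH[(n : ℝ)] (Metric.ball x r) * ENNReal.ofReal (modelBallVol n c R)

/-- Localized version of `RicciGE`: `Ric ≥ (n-1)c` on the region `s`. -/
def RicciGEOn (M : Type*) [MetricSpace M] [MeasurableSpace M] [BorelSpace M]
    (n : ℕ) (c : ℝ) (s : Set M) : Prop :=
  ∀ x ∈ s, ∀ r R : ℝ, 0 < r → r ≤ R → Metric.ball x R ⊆ s →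
    μH[(n : ℝ)] (Metric.ball x R) * ENNReal.ofReal (modelBallVol n c r) ≤
      μH[(n : ℝ)] (Metric.ball x r) * ENNReal.ofReal (modelBallVol n c R)

/-- The 1-skeleton of a simplicial complex in the plane. -/
def oneSkel (S : Geometry.SimplicialComplex ℝ ℂ) : Set ℂ :=
  ⋃ f ∈ {f ∈ S.faces | f.card ≤ 2}, convexHull ℝ (f : Set ℂ)

/-- Equicontinuity at `0` of a family of functions vanishing at `0`. -/
def EquicontAtZero (F : ℕ → ℝ≥0∞ → ℝ≥0∞) : Prop :=
  ∀ ε : ℝ≥0∞, 0 < ε → ∃ δ : ℝ≥0∞, 0 < δ ∧ ∀ i : ℕ, ∀ t < δ, F i t < ε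

end
private lemma exists_path_close' {X : Type} [MetricSpace X] (hX : IsLengthSpace X)
    (a b : X) {ε : ℝ} (hε : 0 < ε) :
    ∃ γ : Path a b, ∀ s : unitInterval, dist a (γ s) ≤ dist a b + ε := by
  have hlt : (⨅ γ : Path a b, eVariationOn (fun t : ℝ => γ.extend t) (Set.Icc 0 1))
      < edist a b + ENNReal.ofReal ε := by
    rw [← hX a b]
    exact ENNReal.lt_add_right (edist_ne_top a b) (ENNReal.ofReal_pos.mpr hε).ne'
  obtain ⟨γ, hγ⟩ := iInf_lt_iff.mp hlt
  refine ⟨γ, fun s => ?_⟩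
  have h3 : edist a (γ s) ≤ edist a b + ENNReal.ofReal ε := by
    calc edist a (γ s) = edist (γ.extend 0) (γ.extend (s : ℝ)) := by
          rw [γ.extend_zero, γ.extend_extends' s]
      _ ≤ eVariationOn (fun t : ℝ => γ.extend t) (Set.Icc 0 1) :=
          eVariationOn.edist_le _ (by constructor <;> norm_num) s.2
      _ ≤ _ := hγ.le
  rw [edist_dist, edist_dist, ← ENNReal.ofReal_add dist_nonneg hε.le] at h3
  exact (ENNReal.ofReal_le_ofReal_iff (by positivity)).mp h3

open Classical in
private noncomputable def glueFun {X : Type} (p0 : X) (g : ℕ → ℝ → X) (Nr : ℝ) :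
    ℕ → ℝ → X
  | 0 => fun _ => p0
  | (k+1) => fun t => if t ≤ (k : ℝ) / Nr then glueFun p0 g Nr k t else g k (Nr * t - k)

private lemma glueFun_zero {X : Type} (p0 : X) (g : ℕ → ℝ → X) (Nr : ℝ) (t : ℝ) :
    glueFun p0 g Nr 0 t = p0 := rfl

open Classical in
private lemma glueFun_succ {X : Type} (p0 : X) (g : ℕ → ℝ → X) (Nr : ℝ) (k : ℕ) (t : ℝ) :
    glueFun p0 g Nr (k+1) t =
      if t ≤ (k : ℝ) / Nr then glueFun p0 g Nr k t else g k (Nr * t - k) := rfl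


/-- near any loop in `B_1(y) ⊆ Y` there is a loop in `X` that is `5ε`-close
to it (measured through the `ε`-GH approximation `f : Y → X`). -/
theorem stmt3 (X Y : Type) [MetricSpace X] [MetricSpace Y] (x : X) (y : Y)
    (hX : IsLengthSpace X) (hY : IsLengthSpace Y)
    (hcomp : IsCompact (closure (Metric.ball y 2)))
    (ε : ℝ) (hε : 0 < ε)
    (f : Y → X) (hf : IsPointedGHApprox f y x ε)
    (c : C(unitInterval, Y)) (hloop : c 0 = c 1)
    (hrange : Set.range c ⊆ Metric.ball y 1) :
    ∃ c' : C(unitInterval, X), c' 0 = c' 1 ∧ ∀ t, dist (f (c t)) (c' t) ≤ 5 * ε := by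
  classical
  obtain ⟨-, hd, -⟩ := hf
  have hfd : ∀ u v : Y, dist (f u) (f v) ≤ dist u v + ε := fun u v => by
    linarith [(abs_le.mp (hd u v)).2]
  -- uniform continuity
  obtain ⟨δ, hδ0, hδ⟩ := Metric.uniformContinuous_iff.mp
    (CompactSpace.uniformContinuous_of_continuous c.continuous) ε hε
  obtain ⟨N, hN0, hNδ⟩ : ∃ N : ℕ, (0:ℝ) < (N:ℝ) ∧ 1 / (N:ℝ) < δ := by
    obtain ⟨N', hN'⟩ := exists_nat_one_div_lt hδ0
    exact ⟨N' + 1, by positivity, by exact_mod_cast hN'⟩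
  set C : ℝ → Y := fun t => c (Set.projIcc 0 1 zero_le_one t) with hCdef
  have hCd : ∀ s t : ℝ, |s - t| < δ → dist (C s) (C t) < ε := by
    intro s t h
    apply hδ
    calc dist (Set.projIcc 0 1 zero_le_one s) (Set.projIcc 0 1 zero_le_one t)
        ≤ 1 * dist s t := (LipschitzWith.projIcc zero_le_one).dist_le_mul s t
      _ = |s - t| := by rw [one_mul, Real.dist_eq]
      _ < δ := h
  set p : ℕ → X := fun i => f (C ((i : ℝ) / N)) with hpdef
  have hpp : ∀ k : ℕ, dist (p k) (p (k+1)) ≤ 2 * ε := by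
    intro k
    have h1 : dist (C ((k : ℝ) / N)) (C (((k+1 : ℕ) : ℝ) / N)) < ε := by
      apply hCd
      have he : (k : ℝ)/N - ((k+1 : ℕ) : ℝ)/N = -(1/N) := by push_cast; ring
      rw [he, abs_neg, abs_of_pos (by positivity)]
      exact hNδ
    calc dist (p k) (p (k+1)) ≤ dist (C ((k : ℝ)/N)) (C (((k+1:ℕ):ℝ)/N)) + ε := hfd _ _
      _ ≤ 2 * ε := by linarith
  choose γ hγ using fun k => exists_path_close' hX (p k) (p (k+1)) hε
  set u : ℕ → ℝ → X := glueFun (p 0) (fun k => (γ k).extend) (N : ℝ) with hudef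
  have husucc : ∀ k t, u (k+1) t =
      if t ≤ (k : ℝ)/N then u k t else (γ k).extend ((N:ℝ) * t - k) := fun k t => rfl
  have h2 : ∀ k : ℕ, ∀ t : ℝ, (k : ℝ)/N ≤ t → u k t = p k := by
    intro k
    induction k with
    | zero => intro t _; rfl
    | succ k ih =>
      intro t ht
      push_cast at ht
      rw [husucc, if_neg]
      · have h1 : (1:ℝ) ≤ (N:ℝ) * t - k := by
          have := (div_le_iff₀ hN0).mp ht
          nlinarith
        rw [(γ k).extend_of_one_le h1]
      · push_neg
        have : (k : ℝ)/N < ((k : ℝ)+1)/N := by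
          apply div_lt_div_of_pos_right (lt_add_one _) hN0
        linarith
  have hu00 : ∀ k, u k 0 = p 0 := by
    intro k
    induction k with
    | zero => rfl
    | succ k ih => rw [husucc, if_pos (by positivity)]; exact ih
  have hcont : ∀ k, Continuous (u k) := by
    intro k
    induction k with
    | zero => exact continuous_const
    | succ k ih =>
      have hg : Continuous fun t : ℝ => (γ k).extend ((N:ℝ) * t - k) :=
        (γ k).continuous_extend.comp ((continuous_const.mul continuous_id).sub continuous_const)
      have key : Continuous fun t : ℝ =>
          if t ≤ (k:ℝ)/N then u k t else (γ k).extend ((N:ℝ) * t - k) := by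
        apply Continuous.if_le ih hg continuous_id continuous_const
        intro a ha
        simp only [id_eq] at ha ⊢
        rw [h2 k a (le_of_eq ha.symm), ha,
          show (N:ℝ) * ((k:ℝ)/N) - k = 0 by field_simp; ring, Path.extend_zero]
      exact key.congr fun t => (husucc k t).symm
  have h3 : ∀ k : ℕ, ∀ t : ℝ, 0 ≤ t → t ≤ (k : ℝ)/N → dist (f (C t)) (u k t) ≤ 5 * ε := by
    intro k
    induction k with
    | zero =>
      intro t ht0 ht1
      have ht : t = 0 := le_antisymm (by simpa using ht1) ht0
      subst ht
      have : u 0 0 = p 0 := rfl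
      rw [this, hpdef]
      simp only [Nat.cast_zero, zero_div]
      rw [dist_self]
      positivity
    | succ k ih =>
      intro t ht0 ht1
      rw [husucc]
      by_cases h : t ≤ (k : ℝ)/N
      · rw [if_pos h]; exact ih t ht0 h
      · rw [if_neg h]
        push_neg at h
        push_cast at ht1
        have htN := (le_div_iff₀ hN0).mp ht1
        have htN' := (div_lt_iff₀ hN0).mp h
        have hcm : t * (N:ℝ) = (N:ℝ) * t := mul_comm _ _
        have hs0 : (0:ℝ) ≤ (N:ℝ) * t - k := by linarith
        have hs1 : (N:ℝ) * t - k ≤ 1 := by linarith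
        rw [(γ k).extend_apply ⟨hs0, hs1⟩]
        have hA : dist (f (C t)) (p k) ≤ 2 * ε := by
          have h1 : dist (C t) (C ((k : ℝ)/N)) < ε := by
            apply hCd
            have hle : t - (k:ℝ)/N ≤ 1/N := by
              have : ((k:ℝ)+1)/N - (k:ℝ)/N = 1/N := by ring
              linarith
            rw [abs_of_nonneg (by linarith)]
            linarith
          calc dist (f (C t)) (p k) ≤ dist (C t) (C ((k:ℝ)/N)) + ε := hfd _ _
            _ ≤ 2 * ε := by linarith
        have hB : dist (p k) ((γ k) ⟨(N:ℝ)*t - k, hs0, hs1⟩) ≤ 3 * ε := by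
          have := hγ k ⟨(N:ℝ)*t - k, hs0, hs1⟩
          linarith [hpp k]
        calc dist (f (C t)) ((γ k) ⟨(N:ℝ)*t - k, hs0, hs1⟩)
            ≤ dist (f (C t)) (p k) + dist (p k) ((γ k) ⟨(N:ℝ)*t - k, hs0, hs1⟩) :=
              dist_triangle _ _ _
          _ ≤ 5 * ε := by linarith
  refine ⟨⟨fun t => u N (t : ℝ), (hcont N).comp continuous_subtype_val⟩, ?_, ?_⟩
  · show u N ((0 : unitInterval) : ℝ) = u N ((1 : unitInterval) : ℝ)
    have e0 : u N ((0 : unitInterval) : ℝ) = p 0 := hu00 N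
    have e1 : u N ((1 : unitInterval) : ℝ) = p N :=
      h2 N 1 (le_of_eq (div_self hN0.ne'))
    rw [e0, e1, hpdef]
    simp only [Nat.cast_zero, zero_div, div_self hN0.ne']
    have h0 : Set.projIcc (0:ℝ) 1 zero_le_one 0 = (0 : unitInterval) :=
      Subtype.ext (by simp [Set.projIcc])
    have h1 : Set.projIcc (0:ℝ) 1 zero_le_one 1 = (1 : unitInterval) :=
      Subtype.ext (by simp [Set.projIcc])
    simp only [hCdef]
    rw [h0, h1, hloop]
  · intro t
    show dist (f (c t)) (u N (t : ℝ)) ≤ 5 * ε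
    have hC_t : C (t : ℝ) = c t := by
      simp only [hCdef]
      congr 1
      exact Subtype.ext (by simp [Set.projIcc, t.2.1, t.2.2])
    have := h3 N (t : ℝ) t.2.1 (by rw [div_self hN0.ne']; exact t.2.2)
    rwa [hC_t] at this
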